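/- For n ≥ 0, the integral (8/π²) ∫_0^π ∫_0^π (2cos θ₁ + 2cos θ₂)^n (cos θ₁ − cos θ₂)² sin²θ₁ sin²θ₂ dθ₁ dθ₂ equals c_n·c_{n+4} − c_{n+2}², where c_m = (2/(m+2))·binom(m, m/2) for even m and c_m = 0 for odd m. -/

import Mathlib

open Real

/-- The Catalan sequence interleaved with zeros: `c m = (2/(m+2)) binom(m, m/2)` for
`m` even and `0` for `m` odd. -/
noncomputable def cSeq (m : ℕ) : ℝ :=
  if Even m then (2 / ((m : ℝ) + 2)) * (m.choose (m / 2) : ℝ) else 0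

open intervalIntegral

/- ### Auxiliary combinatorics: ±1 walk counts -/

noncomputable def wf : ℕ → ℤ → ℝ
  | 0, t => if t = 0 then 1 else 0
  | (n+1), t => wf n (t-1) + wf n (t+1)

lemma wf_zero (t : ℤ) : wf 0 t = if t = 0 then 1 else 0 := rfl
lemma wf_succ (n : ℕ) (t : ℤ) : wf (n+1) t = wf n (t-1) + wf n (t+1) := rfl

lemma wf_neg (n : ℕ) : ∀ t : ℤ, wf n (-t) = wf n t := by
  induction n with
  | zero => intro t; simp [wf_zero, neg_eq_zero]
  | succ n ih =>
    intro t
    rw [wf_succ, wf_succ]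
    have h1 : (-t-1 : ℤ) = -(t+1) := by ring
    have h2 : (-t+1 : ℤ) = -(t-1) := by ring
    rw [h1, h2, ih, ih]; ring

lemma wf_eq (n : ℕ) : ∀ t : ℕ, wf n (t : ℤ) =
    if (n + t) % 2 = 0 then (n.choose ((n+t)/2) : ℝ) else 0 := by
  induction n with
  | zero =>
    intro t
    rcases Nat.eq_zero_or_pos t with h | h
    · subst h; simp [wf_zero]
    · rw [wf_zero, if_neg (by exact_mod_cast (by omega : ¬ (t:ℤ) = 0))]
      by_cases hp : (0 + t) % 2 = 0
      · rw [if_pos hp, Nat.choose_eq_zero_of_lt (by omega : 0 < (0+t)/2)]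
        norm_num
      · rw [if_neg hp]
  | succ n ih =>
    intro t
    rw [wf_succ]
    rcases Nat.eq_zero_or_pos t with h | h
    · subst h
      simp only [Nat.cast_zero]
      rw [show (0:ℤ)-1 = -(0+1) by ring, wf_neg]
      rw [show (0:ℤ)+1 = ((1:ℕ):ℤ) by norm_num, ih 1]
      by_cases hp : (n+1) % 2 = 0
      · rw [if_pos hp, if_pos (by omega)]
        obtain ⟨a, rfl⟩ : ∃ a, n = 2*a+1 := ⟨n/2, by omega⟩
        rw [show (2*a+1+1)/2 = a+1 by omega]
        have hnat : (2*a+1+1).choose (a+1) = (2*a+1).choose a + (2*a+1).choose (a+1) :=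
          Nat.choose_succ_succ _ _
        have hsymm : (2*a+1).choose (a+1) = (2*a+1).choose a := by
          rw [← Nat.choose_symm (by omega : a+1 ≤ 2*a+1), show 2*a+1-(a+1) = a by omega]
        rw [hnat, hsymm]
        push_cast; ring
      · rw [if_neg hp, if_neg (by omega)]; ring
    · obtain ⟨u, rfl⟩ : ∃ u, t = u + 1 := ⟨t - 1, by omega⟩
      rw [show ((u+1:ℕ):ℤ) - 1 = ((u:ℕ):ℤ) by push_cast; ring,
          show ((u+1:ℕ):ℤ) + 1 = ((u+2:ℕ):ℤ) by push_cast; ring, ih u, ih (u+2)]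
      by_cases hp : (n + u) % 2 = 0
      · rw [if_pos hp, if_pos (by omega), if_pos (by omega)]
        rw [show (n+(u+2))/2 = (n+u)/2 + 1 by omega,
            show (n+1+(u+1))/2 = (n+u)/2 + 1 by omega, Nat.choose_succ_succ]
        push_cast; ring
      · rw [if_neg hp, if_neg (by omega), if_neg (by omega)]; ring

lemma wf_conv (n : ℕ) : ∀ r s : ℤ,
    ∑ k ∈ Finset.range (n+1), (n.choose k : ℝ) * (wf k r * wf (n-k) s)
      = wf n (r+s) * wf n (r-s) := by
  induction n with
  | zero =>
    intro r s
    rw [Finset.sum_range_one]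
    norm_num
    rw [wf_zero r, wf_zero s, wf_zero, wf_zero]
    split_ifs <;> first | omega | norm_num
  | succ n ih =>
    intro r s
    have step1 : ∑ k ∈ Finset.range (n+2), ((n+1).choose k : ℝ) * (wf k r * wf (n+1-k) s)
        = (∑ k ∈ Finset.range (n+1), (n.choose k : ℝ) * (wf k r * wf (n+1-k) s))
        + (∑ k ∈ Finset.range (n+1), (n.choose k : ℝ) * (wf (k+1) r * wf (n-k) s)) := by
      rw [Finset.sum_range_succ' _ (n+1)]
      have hlast : ∑ k ∈ Finset.range (n+1), (n.choose k : ℝ) * (wf k r * wf (n+1-k) s)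
          = (n.choose 0 : ℝ) * (wf 0 r * wf (n+1-0) s)
            + ∑ k ∈ Finset.range n, (n.choose (k+1) : ℝ) * (wf (k+1) r * wf (n+1-(k+1)) s) := by
        rw [Finset.sum_range_succ' _ n]; ring
      rw [hlast]
      have h2 : ∑ k ∈ Finset.range (n+1), ((n+1).choose (k+1) : ℝ) * (wf (k+1) r * wf (n+1-(k+1)) s)
          = ∑ k ∈ Finset.range (n+1), ((n.choose k : ℝ) * (wf (k+1) r * wf (n-k) s)
              + (n.choose (k+1) : ℝ) * (wf (k+1) r * wf (n+1-(k+1)) s)) := by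
        refine Finset.sum_congr rfl fun k hk => ?_
        have : n+1-(k+1) = n-k := by omega
        rw [this, Nat.choose_succ_succ' n k]
        push_cast
        ring
      rw [h2, Finset.sum_add_distrib]
      have h3 : ∑ k ∈ Finset.range (n+1), (n.choose (k+1) : ℝ) * (wf (k+1) r * wf (n+1-(k+1)) s)
          = ∑ k ∈ Finset.range n, (n.choose (k+1) : ℝ) * (wf (k+1) r * wf (n+1-(k+1)) s) := by
        rw [Finset.sum_range_succ]
        simp
      rw [h3]
      simp only [Nat.choose_zero_right, Nat.cast_one, one_mul, Nat.sub_zero]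
      ring
    have hA : ∑ k ∈ Finset.range (n+1), (n.choose k : ℝ) * (wf k r * wf (n+1-k) s)
        = (∑ k ∈ Finset.range (n+1), (n.choose k : ℝ) * (wf k r * wf (n-k) (s-1)))
        + (∑ k ∈ Finset.range (n+1), (n.choose k : ℝ) * (wf k r * wf (n-k) (s+1))) := by
      rw [← Finset.sum_add_distrib]
      refine Finset.sum_congr rfl fun k hk => ?_
      have : n+1-k = (n-k)+1 := by
        have : k ≤ n := by simpa [Nat.lt_succ_iff] using hk
        omega
      rw [this, wf_succ]
      ring
    have hB : ∑ k ∈ Finset.range (n+1), (n.choose k : ℝ) * (wf (k+1) r * wf (n-k) s)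
        = (∑ k ∈ Finset.range (n+1), (n.choose k : ℝ) * (wf k (r-1) * wf (n-k) s))
        + (∑ k ∈ Finset.range (n+1), (n.choose k : ℝ) * (wf k (r+1) * wf (n-k) s)) := by
      rw [← Finset.sum_add_distrib]
      refine Finset.sum_congr rfl fun k hk => ?_
      rw [wf_succ]
      ring
    rw [step1, hA, hB, ih, ih, ih, ih]
    rw [show r + (s-1) = r+s-1 by ring, show r - (s-1) = r-s+1 by ring,
        show r + (s+1) = r+s+1 by ring, show r - (s+1) = r-s-1 by ring,
        show r-1+s = r+s-1 by ring, show r-1-s = r-s-1 by ring,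
        show r+1+s = r+s+1 by ring, show r+1-s = r-s+1 by ring,
        wf_succ, wf_succ]
    ring

lemma cSeq_eq (m : ℕ) : cSeq m = wf m 0 - wf m 2 := by
  have h0 := wf_eq m 0
  have h2 := wf_eq m 2
  simp only [Nat.cast_zero] at h0
  simp only [Nat.cast_ofNat] at h2
  rw [cSeq]
  by_cases hp : m % 2 = 0
  · rw [if_pos (Nat.even_iff.mpr hp)]
    obtain ⟨a, rfl⟩ : ∃ a, m = 2*a := ⟨m/2, by omega⟩
    rw [h0, h2, if_pos (by omega), if_pos (by omega)]
    rw [show (2*a+0)/2 = a by omega, show (2*a+2)/2 = a+1 by omega,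
        show (2*a)/2 = a by omega]
    have hnat : (2*a).choose (a+1) * (a+1) = (2*a).choose a * (2*a - a) :=
      Nat.choose_succ_right_eq (2*a) a
    rw [show 2*a-a = a by omega] at hnat
    have hr : ((2*a).choose (a+1) : ℝ) * ((a:ℝ)+1) = ((2*a).choose a : ℝ) * a := by
      exact_mod_cast hnat
    have hne : ((2*a:ℕ):ℝ) + 2 ≠ 0 := by positivity
    field_simp
    push_cast at hr ⊢
    linear_combination 2 * hr
  · rw [if_neg (by simpa [Nat.even_iff] using hp), h0, h2,
        if_neg (by omega), if_neg (by omega)]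
    ring

lemma wf2_0 (n : ℕ) : wf (n+2) 0 = 2*wf n 0 + 2*wf n 2 := by
  rw [show n+2 = n+1+1 from rfl, wf_succ, wf_succ, wf_succ]
  rw [show (0:ℤ)-1-1 = -2 by ring, show (0:ℤ)-1+1 = 0 by ring,
      show (0:ℤ)+1-1 = 0 by ring, show (0:ℤ)+1+1 = 2 by ring,
      show (-2:ℤ) = -(2:ℤ) by ring, wf_neg]
  ring

lemma wf2_2 (n : ℕ) : wf (n+2) 2 = wf n 0 + 2*wf n 2 + wf n 4 := by
  rw [show n+2 = n+1+1 from rfl, wf_succ, wf_succ, wf_succ]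
  rw [show (2:ℤ)-1-1 = 0 by ring, show (2:ℤ)-1+1 = 2 by ring,
      show (2:ℤ)+1-1 = 2 by ring, show (2:ℤ)+1+1 = 4 by ring]
  ring

lemma wf2_4 (n : ℕ) : wf (n+2) 4 = wf n 2 + 2*wf n 4 + wf n 6 := by
  rw [show n+2 = n+1+1 from rfl, wf_succ, wf_succ, wf_succ]
  rw [show (4:ℤ)-1-1 = 2 by ring, show (4:ℤ)-1+1 = 4 by ring,
      show (4:ℤ)+1-1 = 4 by ring, show (4:ℤ)+1+1 = 6 by ring]
  ring

lemma cSeq_eq2 (n : ℕ) : cSeq (n+2) = wf n 0 - wf n 4 := by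
  rw [cSeq_eq, wf2_0, wf2_2]; ring

lemma cSeq_eq4 (n : ℕ) : cSeq (n+4) = 2*wf n 0 + wf n 2 - 2*wf n 4 - wf n 6 := by
  have : cSeq (n+4) = cSeq ((n+2)+2) := by norm_num
  rw [this, cSeq_eq2 (n+2), wf2_0, wf2_4]
  ring

/- ### Auxiliary analysis: cosine-power Fourier integrals -/

noncomputable def Hi (n : ℕ) (r : ℤ) : ℝ :=
  ∫ θ in (0:ℝ)..π, (2 * Real.cos θ)^n * Real.cos (r * θ)

lemma Hi_zero (r : ℤ) : Hi 0 r = if r = 0 then π else 0 := by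
  rw [Hi]
  by_cases hr : r = 0
  · subst hr; simp
  · rw [if_neg hr]
    have hc : ((r:ℝ)) ≠ 0 := Int.cast_ne_zero.mpr hr
    have key := intervalIntegral.integral_comp_mul_left (fun x => Real.cos x) hc (a := 0) (b := π)
    simp only [mul_zero, pow_zero, one_mul] at key ⊢
    rw [key, integral_cos]
    simp [Real.sin_int_mul_pi]

lemma Hi_succ (n : ℕ) (r : ℤ) : Hi (n+1) r = Hi n (r-1) + Hi n (r+1) := by
  have hpt : ∀ θ : ℝ, (2 * Real.cos θ)^(n+1) * Real.cos (r * θ)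
      = (2 * Real.cos θ)^n * Real.cos ((r-1 : ℤ) * θ)
        + (2 * Real.cos θ)^n * Real.cos ((r+1 : ℤ) * θ) := by
    intro θ
    have h1 : ((r-1 : ℤ) : ℝ) * θ = (r:ℝ)*θ - θ := by push_cast; ring
    have h2 : ((r+1 : ℤ) : ℝ) * θ = (r:ℝ)*θ + θ := by push_cast; ring
    rw [h1, h2, Real.cos_sub, Real.cos_add, pow_succ]
    ring
  rw [Hi, Hi, Hi]
  rw [intervalIntegral.integral_congr (g := fun θ => (2 * Real.cos θ)^n * Real.cos ((r-1 : ℤ) * θ)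
        + (2 * Real.cos θ)^n * Real.cos ((r+1 : ℤ) * θ)) (fun θ _ => hpt θ)]
  exact intervalIntegral.integral_add
    ((by fun_prop : Continuous fun θ : ℝ => (2 * Real.cos θ)^n * Real.cos ((r-1 : ℤ) * θ)).intervalIntegrable _ _)
    ((by fun_prop : Continuous fun θ : ℝ => (2 * Real.cos θ)^n * Real.cos ((r+1 : ℤ) * θ)).intervalIntegrable _ _)

lemma Hi_eq (n : ℕ) : ∀ r : ℤ, Hi n r = π * wf n r := by
  induction n with
  | zero =>
    intro r
    rw [Hi_zero, wf_zero]
    split_ifs <;> simp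
  | succ n ih =>
    intro r
    rw [Hi_succ, ih, ih, wf_succ]; ring

lemma sinsin (n : ℕ) (a b : ℤ) :
    (∫ θ in (0:ℝ)..π, (2 * Real.cos θ)^n * (Real.sin (a*θ) * Real.sin (b*θ)))
      = π/2 * (wf n (a-b) - wf n (a+b)) := by
  have hpt : ∀ θ : ℝ, (2 * Real.cos θ)^n * (Real.sin (a*θ) * Real.sin (b*θ))
      = ((2 * Real.cos θ)^n * Real.cos ((a-b:ℤ) * θ)
          - (2 * Real.cos θ)^n * Real.cos ((a+b:ℤ) * θ))/2 := by
    intro θ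
    have h1 : ((a-b : ℤ) : ℝ) * θ = (a:ℝ)*θ - (b:ℝ)*θ := by push_cast; ring
    have h2 : ((a+b : ℤ) : ℝ) * θ = (a:ℝ)*θ + (b:ℝ)*θ := by push_cast; ring
    rw [h1, h2, Real.cos_sub, Real.cos_add]
    ring
  rw [intervalIntegral.integral_congr
      (g := fun θ => ((2 * Real.cos θ)^n * Real.cos ((a-b:ℤ) * θ)
          - (2 * Real.cos θ)^n * Real.cos ((a+b:ℤ) * θ))/2) (fun θ _ => hpt θ)]
  rw [intervalIntegral.integral_div, intervalIntegral.integral_sub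
    ((by fun_prop : Continuous fun θ : ℝ => (2 * Real.cos θ)^n * Real.cos ((a-b : ℤ) * θ)).intervalIntegrable _ _)
    ((by fun_prop : Continuous fun θ : ℝ => (2 * Real.cos θ)^n * Real.cos ((a+b : ℤ) * θ)).intervalIntegrable _ _)]
  rw [show (∫ θ in (0:ℝ)..π, (2 * Real.cos θ)^n * Real.cos ((a-b:ℤ) * θ)) = Hi n (a-b) from rfl,
      show (∫ θ in (0:ℝ)..π, (2 * Real.cos θ)^n * Real.cos ((a+b:ℤ) * θ)) = Hi n (a+b) from rfl,
      Hi_eq, Hi_eq]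
  ring

lemma intA (m : ℕ) :
    (∫ θ in (0:ℝ)..π, (2 * Real.cos θ)^m * Real.sin θ^2) = π/2 * (wf m 0 - wf m 2) := by
  rw [show π/2 * (wf m 0 - wf m 2) = π/2 * (wf m ((1:ℤ)-1) - wf m ((1:ℤ)+1)) by norm_num,
      ← sinsin m 1 1]
  refine intervalIntegral.integral_congr fun θ _ => ?_
  simp only [Int.cast_one, one_mul]
  ring

lemma intB (m : ℕ) :
    (∫ θ in (0:ℝ)..π, (2 * Real.cos θ)^m * Real.sin (2*θ)^2) = π/2 * (wf m 0 - wf m 4) := by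
  rw [show π/2 * (wf m 0 - wf m 4) = π/2 * (wf m ((2:ℤ)-2) - wf m ((2:ℤ)+2)) by norm_num,
      ← sinsin m 2 2]
  refine intervalIntegral.integral_congr fun θ _ => ?_
  simp only [Int.cast_ofNat]
  push_cast
  ring

lemma intC (m : ℕ) :
    (∫ θ in (0:ℝ)..π, (2 * Real.cos θ)^m * (Real.sin θ * Real.sin (2*θ)))
      = π/2 * (wf m 1 - wf m 3) := by
  rw [show π/2 * (wf m 1 - wf m 3)
        = π/2 * (wf m ((1:ℤ)-2) - wf m ((1:ℤ)+2)) by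
      rw [show ((1:ℤ)-2) = -1 by ring, show ((1:ℤ)+2) = 3 by ring,
          show (-1:ℤ) = -(1:ℤ) by ring, wf_neg],
      ← sinsin m 1 2]
  refine intervalIntegral.integral_congr fun θ _ => ?_
  push_cast
  ring

lemma int_lin (a b c : ℝ) {f g h : ℝ → ℝ} (hf : Continuous f) (hg : Continuous g)
    (hh : Continuous h) :
    (∫ t in (0:ℝ)..π, (a * f t + b * g t + c * h t))
      = a * (∫ t in (0:ℝ)..π, f t) + b * (∫ t in (0:ℝ)..π, g t)
        + c * (∫ t in (0:ℝ)..π, h t) := by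
  rw [intervalIntegral.integral_add ((by fun_prop : Continuous fun t => a * f t + b * g t).intervalIntegrable _ _)
        ((by fun_prop : Continuous fun t => c * h t).intervalIntegrable _ _),
      intervalIntegral.integral_add ((by fun_prop : Continuous fun t => a * f t).intervalIntegrable _ _)
        ((by fun_prop : Continuous fun t => b * g t).intervalIntegrable _ _),
      intervalIntegral.integral_const_mul, intervalIntegral.integral_const_mul,
      intervalIntegral.integral_const_mul]

/-- The `n`-th trace moment of `USp(4)`:
`(8/π²) ∫_0^π ∫_0^π (2cosθ₁ + 2cosθ₂)^n (cosθ₁ - cosθ₂)² sin²θ₁ sin²θ₂ dθ₁ dθ₂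
  = c_n c_{n+4} - c_{n+2}²`. -/
theorem trace_moment_USp4 (n : ℕ) :
    (8 / π ^ 2) * ∫ θ₁ in (0:ℝ)..π, ∫ θ₂ in (0:ℝ)..π,
        (2 * Real.cos θ₁ + 2 * Real.cos θ₂) ^ n * (Real.cos θ₁ - Real.cos θ₂) ^ 2 *
          Real.sin θ₁ ^ 2 * Real.sin θ₂ ^ 2 =
      cSeq n * cSeq (n + 4) - cSeq (n + 2) ^ 2 := by
  have hinner : ∀ θ₁ : ℝ, (∫ θ₂ in (0:ℝ)..π,
      (2 * Real.cos θ₁ + 2 * Real.cos θ₂) ^ n * (Real.cos θ₁ - Real.cos θ₂) ^ 2 *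
        Real.sin θ₁ ^ 2 * Real.sin θ₂ ^ 2)
      = ∑ k ∈ Finset.range (n+1),
          (((n.choose k : ℝ) * (π/2 * (wf (n-k) 0 - wf (n-k) 2)) / 4)
              * ((2 * Real.cos θ₁)^k * Real.sin (2*θ₁)^2)
            + ((n.choose k : ℝ) * (π/2 * (wf (n-k) 0 - wf (n-k) 4)) / 4)
              * ((2 * Real.cos θ₁)^k * Real.sin θ₁^2)
            + (-((n.choose k : ℝ) * (π/2 * (wf (n-k) 1 - wf (n-k) 3))) / 2)
              * ((2 * Real.cos θ₁)^k * (Real.sin θ₁ * Real.sin (2*θ₁)))) := by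
    intro θ₁
    have hpt : ∀ θ₂ : ℝ,
        (2 * Real.cos θ₁ + 2 * Real.cos θ₂) ^ n * (Real.cos θ₁ - Real.cos θ₂) ^ 2 *
          Real.sin θ₁ ^ 2 * Real.sin θ₂ ^ 2
        = ∑ k ∈ Finset.range (n+1),
            (((n.choose k : ℝ) * ((2 * Real.cos θ₁)^k * Real.sin (2*θ₁)^2) / 4)
                * ((2 * Real.cos θ₂)^(n-k) * Real.sin θ₂^2)
              + ((n.choose k : ℝ) * ((2 * Real.cos θ₁)^k * Real.sin θ₁^2) / 4)
                * ((2 * Real.cos θ₂)^(n-k) * Real.sin (2*θ₂)^2)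
              + (-((n.choose k : ℝ) * ((2 * Real.cos θ₁)^k * (Real.sin θ₁ * Real.sin (2*θ₁)))) / 2)
                * ((2 * Real.cos θ₂)^(n-k) * (Real.sin θ₂ * Real.sin (2*θ₂)))) := by
      intro θ₂
      rw [add_pow, Finset.sum_mul, Finset.sum_mul, Finset.sum_mul]
      refine Finset.sum_congr rfl fun k hk => ?_
      rw [Real.sin_two_mul θ₁, Real.sin_two_mul θ₂]
      ring
    rw [intervalIntegral.integral_congr (fun θ₂ _ => hpt θ₂)]
    rw [intervalIntegral.integral_finset_sum (fun k _ =>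
      ((by fun_prop : Continuous fun θ₂ : ℝ =>
          (((n.choose k : ℝ) * ((2 * Real.cos θ₁)^k * Real.sin (2*θ₁)^2) / 4)
                * ((2 * Real.cos θ₂)^(n-k) * Real.sin θ₂^2)
              + ((n.choose k : ℝ) * ((2 * Real.cos θ₁)^k * Real.sin θ₁^2) / 4)
                * ((2 * Real.cos θ₂)^(n-k) * Real.sin (2*θ₂)^2)
              + (-((n.choose k : ℝ) * ((2 * Real.cos θ₁)^k * (Real.sin θ₁ * Real.sin (2*θ₁)))) / 2)
                * ((2 * Real.cos θ₂)^(n-k) * (Real.sin θ₂ * Real.sin (2*θ₂))))).intervalIntegrable _ _))]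
    refine Finset.sum_congr rfl fun k hk => ?_
    rw [int_lin _ _ _ (by fun_prop) (by fun_prop) (by fun_prop),
        intA (n-k), intB (n-k), intC (n-k)]
    ring
  rw [intervalIntegral.integral_congr (fun θ₁ _ => hinner θ₁)]
  rw [intervalIntegral.integral_finset_sum (fun k _ =>
    ((by fun_prop : Continuous fun θ₁ : ℝ =>
        (((n.choose k : ℝ) * (π/2 * (wf (n-k) 0 - wf (n-k) 2)) / 4)
              * ((2 * Real.cos θ₁)^k * Real.sin (2*θ₁)^2)
            + ((n.choose k : ℝ) * (π/2 * (wf (n-k) 0 - wf (n-k) 4)) / 4)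
              * ((2 * Real.cos θ₁)^k * Real.sin θ₁^2)
            + (-((n.choose k : ℝ) * (π/2 * (wf (n-k) 1 - wf (n-k) 3))) / 2)
              * ((2 * Real.cos θ₁)^k * (Real.sin θ₁ * Real.sin (2*θ₁))))).intervalIntegrable _ _))]
  have hval : ∀ k, (∫ θ₁ in (0:ℝ)..π,
          (((n.choose k : ℝ) * (π/2 * (wf (n-k) 0 - wf (n-k) 2)) / 4)
              * ((2 * Real.cos θ₁)^k * Real.sin (2*θ₁)^2)
            + ((n.choose k : ℝ) * (π/2 * (wf (n-k) 0 - wf (n-k) 4)) / 4)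
              * ((2 * Real.cos θ₁)^k * Real.sin θ₁^2)
            + (-((n.choose k : ℝ) * (π/2 * (wf (n-k) 1 - wf (n-k) 3))) / 2)
              * ((2 * Real.cos θ₁)^k * (Real.sin θ₁ * Real.sin (2*θ₁)))))
      = π^2/16 * ((n.choose k : ℝ) * (wf k 0 * wf (n-k) 0)
          - (n.choose k : ℝ) * (wf k 0 * wf (n-k) 2)
          - (n.choose k : ℝ) * (wf k 4 * wf (n-k) 0)
          + (n.choose k : ℝ) * (wf k 4 * wf (n-k) 2)
          + (n.choose k : ℝ) * (wf k 0 * wf (n-k) 0)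
          - (n.choose k : ℝ) * (wf k 0 * wf (n-k) 4)
          - (n.choose k : ℝ) * (wf k 2 * wf (n-k) 0)
          + (n.choose k : ℝ) * (wf k 2 * wf (n-k) 4)
          - (n.choose k : ℝ) * (wf k 1 * wf (n-k) 1)
          + (n.choose k : ℝ) * (wf k 1 * wf (n-k) 3)
          - (n.choose k : ℝ) * (wf k 1 * wf (n-k) 1)
          + (n.choose k : ℝ) * (wf k 1 * wf (n-k) 3)
          + (n.choose k : ℝ) * (wf k 3 * wf (n-k) 1)
          - (n.choose k : ℝ) * (wf k 3 * wf (n-k) 3)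
          + (n.choose k : ℝ) * (wf k 3 * wf (n-k) 1)
          - (n.choose k : ℝ) * (wf k 3 * wf (n-k) 3)) := by
    intro k
    rw [int_lin _ _ _ (by fun_prop) (by fun_prop) (by fun_prop), intA k, intB k, intC k]
    ring
  rw [Finset.sum_congr rfl (fun k _ => hval k)]
  rw [← Finset.mul_sum]
  simp only [Finset.sum_add_distrib, Finset.sum_sub_distrib]
  rw [wf_conv n 0 0, wf_conv n 0 2, wf_conv n 4 0, wf_conv n 4 2, wf_conv n 0 4,
      wf_conv n 2 0, wf_conv n 2 4, wf_conv n 1 1, wf_conv n 1 3, wf_conv n 3 1,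
      wf_conv n 3 3]
  norm_num
  rw [wf_neg n 2, wf_neg n 4]
  rw [cSeq_eq n, cSeq_eq2 n, cSeq_eq4 n]
  have hπ : (π:ℝ) ≠ 0 := Real.pi_ne_zero
  field_simp
  ring
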